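/- If a matching M is produced by the greedy algorithm that iterates over edges of a weighted graph in non-increasing order of weight and adds an edge whenever both endpoints are unmatched, then the weight of M is at least half the weight of a maximum weight matching. -/

import Mathlib

/-- Two edges (as unordered pairs) are adjacent: they share an endpoint. -/
def EdgeAdj {V : Type*} (e e' : Sym2 V) : Prop := ∃ v : V, v ∈ e ∧ v ∈ e'

/-- `M` is a matching in the graph `G`: its members are edges of `G` that are
pairwise vertex-disjoint. -/
def IsMatchingIn {V : Type*} (G : SimpleGraph V) (M : Finset (Sym2 V)) : Prop :=
  (∀ e ∈ M, e ∈ G.edgeSet) ∧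
  (∀ e ∈ M, ∀ e' ∈ M, e ≠ e' → ∀ v : V, v ∈ e → v ∉ e')

/-- a greedy matching (every edge of the graph is either in `M` or blocked
by an `M`-edge of at least its weight) has weight at least half that of any
(in particular a maximum weight) matching. -/
theorem greedy_matching_two_approx {V : Type*} [Fintype V] [DecidableEq V]
    (G : SimpleGraph V) (w : Sym2 V → ℝ) (hw : ∀ e, 0 ≤ w e)
    (M Mstar : Finset (Sym2 V))
    (hM : IsMatchingIn G M) (hMstar : IsMatchingIn G Mstar)
    (hgreedy : ∀ e ∈ G.edgeSet, e ∈ M ∨ ∃ e' ∈ M, EdgeAdj e e' ∧ w e ≤ w e') :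
    (∑ e ∈ Mstar, w e) / 2 ≤ ∑ e ∈ M, w e := by
  classical
  -- choose for each e ∈ Mstar a blocker f e ∈ M and shared vertex g e
  have hch : ∀ e : Sym2 V, ∃ e' v, e ∈ Mstar →
      e' ∈ M ∧ v ∈ e ∧ v ∈ e' ∧ w e ≤ w e' := by
    intro e
    by_cases he : e ∈ Mstar
    · rcases hgreedy e (hMstar.1 e he) with h | ⟨e', he', ⟨v, hv1, hv2⟩, hwe⟩
      · exact ⟨e, e.out.1, fun _ => ⟨h, Sym2.out_fst_mem e, Sym2.out_fst_mem e, le_rfl⟩⟩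
      · exact ⟨e', v, fun _ => ⟨he', hv1, hv2, hwe⟩⟩
    · exact ⟨e, e.out.1, fun h => absurd h he⟩
  choose f g hch using hch
  have hfM : ∀ e ∈ Mstar, f e ∈ M := fun e he => (hch e he).1
  have hge : ∀ e ∈ Mstar, g e ∈ e := fun e he => (hch e he).2.1
  have hgf : ∀ e ∈ Mstar, g e ∈ f e := fun e he => (hch e he).2.2.1
  have hwf : ∀ e ∈ Mstar, w e ≤ w (f e) := fun e he => (hch e he).2.2.2
  -- fiber cardinality bound
  have hcard : ∀ b ∈ M, (Mstar.filter (fun a => f a = b)).card ≤ 2 := by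
    intro b _
    induction b using Sym2.ind with
    | _ x y =>
      have : (Mstar.filter (fun a => f a = s(x, y))).card ≤ ({x, y} : Finset V).card := by
        apply Finset.card_le_card_of_injOn g
        · intro a ha
          rw [Finset.mem_coe, Finset.mem_filter] at ha
          have := hgf a ha.1
          rw [ha.2] at this
          simp only [Finset.mem_coe, Finset.mem_insert, Finset.mem_singleton]
          exact (Sym2.mem_iff).mp this
        · intro a ha a' ha' hgg
          rw [Finset.mem_coe, Finset.mem_filter] at ha ha'
          by_contra hne
          exact hMstar.2 a ha.1 a' ha'.1 hne (g a) (hge a ha.1) (hgg ▸ hge a' ha'.1)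
      calc (Mstar.filter (fun a => f a = s(x, y))).card ≤ ({x, y} : Finset V).card := this
        _ ≤ 2 := Finset.card_insert_le _ _ |>.trans (by simp)
  have key : ∑ e ∈ Mstar, w e ≤ 2 * ∑ e ∈ M, w e := by
    have step2 : ∀ b ∈ M, ∑ a ∈ Mstar.filter (fun a => f a = b), w (f a) ≤ 2 * w b := by
      intro b hb
      have heq : ∑ a ∈ Mstar.filter (fun a => f a = b), w (f a)
          = (Mstar.filter (fun a => f a = b)).card * w b := by
        rw [Finset.sum_congr rfl (fun a ha => by
          rw [(Finset.mem_filter.mp ha).2]), Finset.sum_const, nsmul_eq_mul]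
      rw [heq]
      apply mul_le_mul_of_nonneg_right _ (hw b)
      exact_mod_cast hcard b hb
    calc ∑ e ∈ Mstar, w e ≤ ∑ e ∈ Mstar, w (f e) := Finset.sum_le_sum hwf
      _ = ∑ b ∈ M, ∑ a ∈ Mstar.filter (fun a => f a = b), w (f a) :=
          (Finset.sum_fiberwise_of_maps_to hfM _).symm
      _ ≤ ∑ b ∈ M, 2 * w b := Finset.sum_le_sum step2
      _ = 2 * ∑ e ∈ M, w e := (Finset.mul_sum _ _ _).symm
  linarith
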